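/- Consider the Euler system Ṗ₁ = 2P₁P₂ - 3P₃P₄, Ṗ₂ = 2P₃(P₃ - 2P₁), Ṗ₃ = -2P₂(P₃ - 2P₁), Ṗ₄ = 0 on ℝ⁴. Then H = -2P₁² + 2P₁P₃ + 3P₂P₄ - (9/4)P₄² and r² = P₂² + P₃² are constants of motion. -/

import Mathlib

/-- along solutions of the Euler system
`Ṗ₁ = 2P₁P₂ - 3P₃P₄, Ṗ₂ = 2P₃(P₃ - 2P₁), Ṗ₃ = -2P₂(P₃ - 2P₁), Ṗ₄ = 0`,
the functions `H = -2P₁² + 2P₁P₃ + 3P₂P₄ - (9/4)P₄²` and `r² = P₂² + P₃²`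
are constant. -/
theorem stmt11 (P1 P2 P3 P4 : ℝ → ℝ)
    (hd1 : Differentiable ℝ P1) (hd2 : Differentiable ℝ P2)
    (hd3 : Differentiable ℝ P3) (hd4 : Differentiable ℝ P4)
    (h1 : ∀ t, deriv P1 t = 2 * P1 t * P2 t - 3 * P3 t * P4 t)
    (h2 : ∀ t, deriv P2 t = 2 * P3 t * (P3 t - 2 * P1 t))
    (h3 : ∀ t, deriv P3 t = -(2 * P2 t * (P3 t - 2 * P1 t)))
    (h4 : ∀ t, deriv P4 t = 0) :
    (∀ t, deriv (fun s => -(2 * (P1 s) ^ 2) + 2 * P1 s * P3 s + 3 * P2 s * P4 s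
        - (9 / 4) * (P4 s) ^ 2) t = 0) ∧
    (∀ t, deriv (fun s => (P2 s) ^ 2 + (P3 s) ^ 2) t = 0) := by
  constructor <;> intro t
  · have H1 := (hd1 t).hasDerivAt
    have H2 := (hd2 t).hasDerivAt
    have H3 := (hd3 t).hasDerivAt
    have H4 := (hd4 t).hasDerivAt
    rw [h1 t] at H1; rw [h2 t] at H2; rw [h3 t] at H3; rw [h4 t] at H4
    have : HasDerivAt (fun s => -(2 * (P1 s) ^ 2) + 2 * P1 s * P3 s + 3 * P2 s * P4 s
        - (9 / 4) * (P4 s) ^ 2) 0 t := by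
      have := ((((((H1.pow 2).const_mul 2).neg).add
        (((H1.const_mul 2).mul H3))).add
        (((H2.const_mul 3).mul H4))).sub ((H4.pow 2).const_mul (9/4)))
      convert this using 1
      case e'_9 => norm_num; ring
      all_goals rfl
    exact this.deriv
  · have H2 := (hd2 t).hasDerivAt
    have H3 := (hd3 t).hasDerivAt
    rw [h2 t] at H2; rw [h3 t] at H3
    have : HasDerivAt (fun s => (P2 s) ^ 2 + (P3 s) ^ 2) 0 t := by
      have := (H2.pow 2).add (H3.pow 2)
      convert this using 1
      case e'_9 => norm_num; ring
      all_goals rfl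
    exact this.deriv
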